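/- (Proposition 1, Types III and IV.) Let γ₁, γ₂ ∈ ℂ with γ₂ ≠ 0 and let n be a positive integer. (III) With u_III := −(1/2)(n − 1 + iγ₁/(2γ₂)) and E_III := −γ₁²/(4γ₂) − γ₂(n+1)², one has Φ(B, E_III, u_III) = B(B − n − 1)(iγ₁ − 2γ₂(B + 1))(iγ₁ − 2γ₂(B − n)) for all B ∈ ℂ; in particular Φ(0, E_III, u_III) = 0 and Φ(n+1, E_III, u_III) = 0. (IV) With u_IV := −(1/2)(n + 1 − iγ₁/(2γ₂)) and E_IV := −γ₁²/(4γ₂) − γ₂(n+1)², one has Φ(B, E_IV, u_IV) = B(B − n − 1)(iγ₁ + 2γ₂(B − 1))(iγ₁ + 2γ₂(B − n − 2)) for all B ∈ ℂ; in particular Φ(0, E_IV, u_IV) = 0 and Φ(n+1, E_IV, u_IV) = 0. -/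

import Mathlib

noncomputable section
open Complex

/-- `Φ₁(B,E,u) = (1/4)(E − 2iγ₁(B+u) + 4γ₂(B+u)²)`. -/
def Phi1 (γ₁ γ₂ B E u : ℂ) : ℂ :=
  (1/4) * (E - 2*I*γ₁*(B + u) + 4*γ₂*(B + u)^2)

/-- `Φ₂(B,E,u) = E + 2iγ₁(B+u−1) + 4γ₂(B+u−1)²`. -/
def Phi2 (γ₁ γ₂ B E u : ℂ) : ℂ :=
  E + 2*I*γ₁*(B + u - 1) + 4*γ₂*(B + u - 1)^2

/-- `Φ = Φ₁·Φ₂`, the structure function of the quadratic quantum Zernike system. -/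
def Phi (γ₁ γ₂ B E u : ℂ) : ℂ := Phi1 γ₁ γ₂ B E u * Phi2 γ₁ γ₂ B E u

/-- Proposition 1, Types III and IV. -/
theorem prop1_types_III_IV (γ₁ γ₂ : ℂ) (hγ₂ : γ₂ ≠ 0) (n : ℕ) (hn : 1 ≤ n) :
    (∀ B : ℂ, Phi γ₁ γ₂ B (-γ₁^2/(4*γ₂) - γ₂*((n : ℂ) + 1)^2)
          (-(1/2) * ((n : ℂ) - 1 + I*γ₁/(2*γ₂)))
        = B * (B - (n : ℂ) - 1) * (I*γ₁ - 2*γ₂*(B + 1)) * (I*γ₁ - 2*γ₂*(B - (n : ℂ)))) ∧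
    Phi γ₁ γ₂ 0 (-γ₁^2/(4*γ₂) - γ₂*((n : ℂ) + 1)^2)
        (-(1/2) * ((n : ℂ) - 1 + I*γ₁/(2*γ₂))) = 0 ∧
    Phi γ₁ γ₂ ((n : ℂ) + 1) (-γ₁^2/(4*γ₂) - γ₂*((n : ℂ) + 1)^2)
        (-(1/2) * ((n : ℂ) - 1 + I*γ₁/(2*γ₂))) = 0 ∧
    (∀ B : ℂ, Phi γ₁ γ₂ B (-γ₁^2/(4*γ₂) - γ₂*((n : ℂ) + 1)^2)
          (-(1/2) * ((n : ℂ) + 1 - I*γ₁/(2*γ₂)))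
        = B * (B - (n : ℂ) - 1) * (I*γ₁ + 2*γ₂*(B - 1)) * (I*γ₁ + 2*γ₂*(B - (n : ℂ) - 2))) ∧
    Phi γ₁ γ₂ 0 (-γ₁^2/(4*γ₂) - γ₂*((n : ℂ) + 1)^2)
        (-(1/2) * ((n : ℂ) + 1 - I*γ₁/(2*γ₂))) = 0 ∧
    Phi γ₁ γ₂ ((n : ℂ) + 1) (-γ₁^2/(4*γ₂) - γ₂*((n : ℂ) + 1)^2)
        (-(1/2) * ((n : ℂ) + 1 - I*γ₁/(2*γ₂))) = 0 := by
  have hI3 : (I:ℂ)^3 = -I := by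
    rw [pow_succ, Complex.I_sq]; ring
  have hI4 : (I:ℂ)^4 = 1 := by
    rw [show (4:ℕ) = 2*2 from rfl, pow_mul, Complex.I_sq]; ring
  obtain ⟨a, ha⟩ : ∃ a : ℂ, γ₁ = -2*I*γ₂*a :=
    ⟨I*γ₁/(2*γ₂), by field_simp; linear_combination γ₁ * Complex.I_sq⟩
  subst ha
  have h1 : I*(-2*I*γ₂*a)/(2*γ₂) = a := by
    field_simp; linear_combination (-a) * Complex.I_sq
  have h2 : -(-2*I*γ₂*a)^2/(4*γ₂) = γ₂*a^2 := by
    field_simp; linear_combination (-4*a^2) * Complex.I_sq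
  rw [h1, h2]
  have h3 : ∀ B : ℂ, Phi (-2*I*γ₂*a) γ₂ B (γ₂*a^2 - γ₂*((n : ℂ) + 1)^2)
      (-(1/2) * ((n : ℂ) - 1 + a))
      = B * (B - (n : ℂ) - 1) * (I*(-2*I*γ₂*a) - 2*γ₂*(B + 1)) *
        (I*(-2*I*γ₂*a) - 2*γ₂*(B - (n : ℂ))) := by
    intro B
    simp only [Phi, Phi1, Phi2]
    ring_nf
    simp only [Complex.I_sq, hI3, hI4]
    ring
  have h4 : ∀ B : ℂ, Phi (-2*I*γ₂*a) γ₂ B (γ₂*a^2 - γ₂*((n : ℂ) + 1)^2)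
      (-(1/2) * ((n : ℂ) + 1 - a))
      = B * (B - (n : ℂ) - 1) * (I*(-2*I*γ₂*a) + 2*γ₂*(B - 1)) *
        (I*(-2*I*γ₂*a) + 2*γ₂*(B - (n : ℂ) - 2)) := by
    intro B
    simp only [Phi, Phi1, Phi2]
    ring_nf
    simp only [Complex.I_sq, hI3, hI4]
    ring
  exact ⟨h3, by rw [h3 0]; ring, by rw [h3 ((n:ℂ)+1)]; ring, h4, by rw [h4 0]; ring,
    by rw [h4 ((n:ℂ)+1)]; ring⟩
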